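/- Let V and W be varieties of Ω-algebras of the same type without nullary operation symbols, and let Σ be an equational base of V. If the Mal'tsev product V ∘ W is a variety, then Σ^p is an equational base for V ∘ W. -/

import Mathlib

structure Signature where
  symbols : Type
  arity : symbols → ℕ

structure Alg (S : Signature) where
  carrier : Type
  op : ∀ ω : S.symbols, (Fin (S.arity ω) → carrier) → carrier
  nonempty : Nonempty carrier

inductive Term (S : Signature) (X : Type) : Type
  | var : X → Term S X
  | app : ∀ ω : S.symbols, (Fin (S.arity ω) → Term S X) → Term S X

def Term.eval {S : Signature} {X : Type} (A : Alg S) (env : X → A.carrier) :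
    Term S X → A.carrier
  | .var x => env x
  | .app ω ts => A.op ω fun i => (ts i).eval A env

/-- The algebra `A` satisfies the identity `u = v`. -/
def Alg.sat {S : Signature} (A : Alg S) {X : Type} (u v : Term S X) : Prop :=
  ∀ env : X → A.carrier, u.eval A env = v.eval A env

/-- An identity: a pair of terms in the countably many variables `x₀, x₁, …`. -/
abbrev Ident (S : Signature) := Term S ℕ × Term S ℕ

/-- `A` lies in the variety axiomatized by the set of identities `E`. -/
def Alg.Models {S : Signature} (A : Alg S) (E : Set (Ident S)) : Prop :=
  ∀ e ∈ E, A.sat e.1 e.2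

/-- The identity `u = v` holds in the variety axiomatized by `E`. -/
def Conseq {S : Signature} (E : Set (Ident S)) {X : Type} (u v : Term S X) : Prop :=
  ∀ A : Alg S, A.Models E → A.sat u v

/-- `a` is an idempotent element of `A`. -/
def Alg.IsIdem {S : Signature} (A : Alg S) (a : A.carrier) : Prop :=
  ∀ ω : S.symbols, A.op ω (fun _ => a) = a

/-- `B` is (the universe of) a subalgebra of `A`. -/
def Alg.IsSubuniverse {S : Signature} (A : Alg S) (B : Set A.carrier) : Prop :=
  ∀ ω (a : Fin (S.arity ω) → A.carrier), (∀ i, a i ∈ B) → A.op ω a ∈ B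

/-- The subalgebra of `A` on a nonempty subuniverse `B`. -/
def Alg.subAlg {S : Signature} (A : Alg S) (B : Set A.carrier)
    (h : A.IsSubuniverse B) (hne : B.Nonempty) : Alg S where
  carrier := B
  op ω a := ⟨A.op ω fun i => (a i : A.carrier), h ω _ fun i => (a i).2⟩
  nonempty := hne.to_subtype

/-- A congruence of `A`: an equivalence relation compatible with all operations. -/
structure Congruence {S : Signature} (A : Alg S) where
  rel : A.carrier → A.carrier → Prop
  iseqv : Equivalence rel
  compat : ∀ ω (a b : Fin (S.arity ω) → A.carrier),
    (∀ i, rel (a i) (b i)) → rel (A.op ω a) (A.op ω b)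

def Congruence.setoid {S : Signature} {A : Alg S} (θ : Congruence A) :
    Setoid A.carrier := ⟨θ.rel, θ.iseqv⟩

/-- The quotient algebra `A/θ`. -/
noncomputable def Alg.quot {S : Signature} (A : Alg S) (θ : Congruence A) : Alg S where
  carrier := Quotient θ.setoid
  op ω q := Quotient.mk θ.setoid (A.op ω fun i => (q i).out)
  nonempty := A.nonempty.map (Quotient.mk θ.setoid)

/-- Membership in the Mal'tsev product of the varieties axiomatized by `V` and `W`:
`A` has a congruence `θ` with `A/θ` in (the variety of) `W` such that every
`θ`-class which is a subalgebra of `A` is an algebra in (the variety of) `V`. -/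
def InMaltsev {S : Signature} (V W : Set (Ident S)) (A : Alg S) : Prop :=
  ∃ θ : Congruence A, (A.quot θ).Models W ∧
    ∀ a : A.carrier, ∀ h : A.IsSubuniverse {b | θ.rel a b},
      (A.subAlg {b | θ.rel a b} h ⟨a, θ.iseqv.refl a⟩).Models V

/-- A class of algebras is a variety iff it is axiomatized by some set of identities. -/
def IsVarietyClass {S : Signature} (K : Alg S → Prop) : Prop :=
  ∃ E : Set (Ident S), ∀ A : Alg S, K A ↔ A.Models E

def Term.subst {S : Signature} {X Y : Type} (f : X → Term S Y) :
    Term S X → Term S Y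
  | .var x => f x
  | .app ω ts => .app ω fun i => (ts i).subst f

/-- The set `σᵖ` of identities obtained from the identity `σ` by substituting for
its variables pairwise `W`-equivalent term idempotents of (the variety of) `W`. -/
def sigmaP {S : Signature} (W : Set (Ident S)) (σ : Ident S) : Set (Ident S) :=
  { e | ∃ r : ℕ → Term S ℕ,
      (∀ i j : ℕ, Conseq W (r i) (r j)) ∧
      (∀ ω : S.symbols, Conseq W (Term.app ω fun _ => r 0) (r 0)) ∧
      e = (σ.1.subst r, σ.2.subst r) }

/-- `Σᵖ = ⋃_{σ ∈ Σ} σᵖ`. -/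
def SigmaP {S : Signature} (W : Set (Ident S)) (Sg : Set (Ident S)) :
    Set (Ident S) :=
  ⋃ σ ∈ Sg, sigmaP W σ


namespace StmtAux

variable {S : Signature}

theorem eval_app {X : Type} (A : Alg S) (env : X → A.carrier) (ω : S.symbols)
    (ts : Fin (S.arity ω) → Term S X) :
    (Term.app ω ts).eval A env = A.op ω (fun i => (ts i).eval A env) := rfl

theorem eval_subst {X Y : Type} (A : Alg S) (f : X → Term S Y) (env : Y → A.carrier)
    (t : Term S X) :
    (t.subst f).eval A env = t.eval A (fun x => (f x).eval A env) := by
  induction t with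
  | var x => rfl
  | app ω ts ih => simp only [Term.subst, Term.eval, ih]

theorem subst_var (t : Term S ℕ) : t.subst Term.var = t := by
  induction t with
  | var x => rfl
  | app ω ts ih => simp only [Term.subst, ih]

theorem conseq_refl (E : Set (Ident S)) {X : Type} (t : Term S X) : Conseq E t t :=
  fun _ _ _ => rfl

theorem conseq_symm {E : Set (Ident S)} {X : Type} {u v : Term S X}
    (h : Conseq E u v) : Conseq E v u :=
  fun A hA env => (h A hA env).symm

theorem conseq_trans {E : Set (Ident S)} {X : Type} {u v w : Term S X}
    (h1 : Conseq E u v) (h2 : Conseq E v w) : Conseq E u w :=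
  fun A hA env => (h1 A hA env).trans (h2 A hA env)

theorem conseq_of_mem {E : Set (Ident S)} {e : Ident S} (he : e ∈ E) :
    Conseq E e.1 e.2 := fun A hA => hA e he

theorem conseq_subst {E : Set (Ident S)} {X Y : Type} {u v : Term S X}
    (f : X → Term S Y) (h : Conseq E u v) : Conseq E (u.subst f) (v.subst f) := by
  intro A hA env
  rw [eval_subst, eval_subst]
  exact h A hA _

theorem conseq_app {E : Set (Ident S)} {X : Type} {ω : S.symbols}
    {a b : Fin (S.arity ω) → Term S X} (h : ∀ i, Conseq E (a i) (b i)) :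
    Conseq E (Term.app ω a) (Term.app ω b) := by
  intro A hA env
  simp only [Term.eval]
  exact congrArg _ (funext fun i => h i A hA env)

theorem conseq_mono {E E' : Set (Ident S)} {X : Type} {u v : Term S X}
    (hm : ∀ A : Alg S, A.Models E' → A.Models E) (h : Conseq E u v) :
    Conseq E' u v := fun A hA => h A (hm A hA)

theorem eval_const {X : Type} {A : Alg S} {c : A.carrier} (hc : A.IsIdem c)
    {env : X → A.carrier} (henv : ∀ x, env x = c) (t : Term S X) :
    t.eval A env = c := by
  induction t with
  | var x => exact henv x
  | app ω ts ih =>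
    simp only [Term.eval, ih]
    exact hc ω

/-- Every model of `W` models `SigmaP W Sg`. -/
theorem models_SigmaP {W Sg : Set (Ident S)} {B : Alg S} (hB : B.Models W) :
    B.Models (SigmaP W Sg) := by
  intro e he
  simp only [SigmaP, Set.mem_iUnion] at he
  obtain ⟨σ, hσ, r, hr, hid, rfl⟩ := he
  intro env
  have hc : B.IsIdem ((r 0).eval B env) := by
    intro ω
    have := hid ω B hB env
    simpa only [Term.eval] using this
  have henv : ∀ n : ℕ, (r n).eval B env = (r 0).eval B env :=
    fun n => hr n 0 B hB env
  simp only [eval_subst]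
  rw [eval_const hc henv, eval_const hc henv]

theorem conseqSP {W Sg : Set (Ident S)} {u v : Term S ℕ}
    (h : Conseq (SigmaP W Sg) u v) : Conseq W u v :=
  conseq_mono (fun _ hA => models_SigmaP hA) h

theorem quot_op (A : Alg S) (θ : Congruence A) (ω : S.symbols)
    (d : Fin (S.arity ω) → A.carrier) :
    (A.quot θ).op ω (fun i => Quotient.mk θ.setoid (d i))
      = Quotient.mk θ.setoid (A.op ω d) := by
  apply Quotient.sound
  apply θ.compat
  intro i
  show θ.setoid.r (Quotient.mk θ.setoid (d i)).out (d i)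
  exact Quotient.exact (Quotient.out_eq _)

theorem quot_eval {X : Type} (A : Alg S) (θ : Congruence A) (c : X → A.carrier)
    (t : Term S X) :
    t.eval (A.quot θ) (fun x => Quotient.mk θ.setoid (c x))
      = Quotient.mk θ.setoid (t.eval A c) := by
  induction t with
  | var x => rfl
  | app ω ts ih =>
    simp only [Term.eval, ih]
    exact quot_op A θ ω _

theorem sub_eval {X : Type} (A : Alg S) (B : Set A.carrier) (h : A.IsSubuniverse B)
    (hne : B.Nonempty) (env : X → B) (t : Term S X) :
    Subtype.val (t.eval (A.subAlg B h hne) env)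
      = t.eval A (fun x => (env x : A.carrier)) := by
  induction t with
  | var x => rfl
  | app ω ts ih => simp only [Term.eval, Alg.subAlg, ← ih]

/-- The term algebra on countably many variables. -/
def TAlg (S : Signature) : Alg S where
  carrier := Term S ℕ
  op := Term.app
  nonempty := ⟨.var 0⟩

theorem T_eval (f : ℕ → Term S ℕ) (t : Term S ℕ) :
    t.eval (TAlg S) f = t.subst f := by
  induction t with
  | var x => rfl
  | app ω ts ih => simp only [Term.eval, Term.subst, ih]; rfl

/-- The congruence of `E`-consequence on the term algebra. -/
def congOf (E : Set (Ident S)) : Congruence (TAlg S) where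
  rel := Conseq E
  iseqv := ⟨fun t => conseq_refl E t, conseq_symm, conseq_trans⟩
  compat ω a b h := conseq_app h

/-- The relatively free algebra of the variety of `E`. -/
noncomputable def FreeA (E : Set (Ident S)) : Alg S := (TAlg S).quot (congOf E)

theorem free_eval (E : Set (Ident S)) (r : ℕ → Term S ℕ) (t : Term S ℕ) :
    t.eval (FreeA E) (fun n => Quotient.mk (congOf E).setoid (r n))
      = Quotient.mk (congOf E).setoid (t.subst r) := by
  have h := quot_eval (TAlg S) (congOf E) r t
  rw [T_eval] at h
  exact h

theorem free_models (E : Set (Ident S)) : (FreeA E).Models E := by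
  intro e he env
  set r : ℕ → Term S ℕ := fun n => (env n).out with hrdef
  have henv : env = fun n => Quotient.mk (congOf E).setoid (r n) := by
    funext n; exact (Quotient.out_eq (env n)).symm
  rw [henv, free_eval, free_eval]
  exact Quotient.sound (conseq_subst r (conseq_of_mem he))

theorem out_equiv (E : Set (Ident S)) (t : Term S ℕ) :
    Conseq E (Quotient.mk (congOf E).setoid t).out t := by
  have h : (congOf E).setoid.r (Quotient.mk (congOf E).setoid t).out t :=
    Quotient.exact (Quotient.out_eq _)
  exact h


theorem forward {V W Sg : Set (Ident S)}
    (hbase : ∀ A : Alg S, A.Models V ↔ A.Models Sg)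
    (A : Alg S) (hA : InMaltsev V W A) : A.Models (SigmaP W Sg) := by
  obtain ⟨θ, hq, hcls⟩ := hA
  intro e he
  simp only [SigmaP, Set.mem_iUnion] at he
  obtain ⟨σ, hσ, r, hr, hid, rfl⟩ := he
  intro env
  set a : ℕ → A.carrier := fun n => (r n).eval A env with ha
  have key : ∀ n, θ.rel (a 0) (a n) := by
    intro n
    have h1 := quot_eval A θ env (r 0)
    have h2 := quot_eval A θ env (r n)
    have h3 := hr 0 n (A.quot θ) hq (fun m => Quotient.mk θ.setoid (env m))
    rw [h1, h2] at h3
    have h4 : θ.setoid.r (a 0) (a n) := Quotient.exact h3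
    exact h4
  have hsub : A.IsSubuniverse {b | θ.rel (a 0) b} := by
    intro ω d hd
    have h5 : θ.rel (A.op ω fun _ => a 0) (A.op ω d) := θ.compat ω _ _ fun i => hd i
    have h4 := hid ω (A.quot θ) hq (fun m => Quotient.mk θ.setoid (env m))
    rw [quot_eval, quot_eval] at h4
    have h6 : θ.setoid.r ((Term.app ω fun _ => r 0).eval A env) (a 0) :=
      Quotient.exact h4
    have h7 : θ.rel (A.op ω fun _ => a 0) (a 0) := h6
    exact θ.iseqv.trans (θ.iseqv.symm h7) h5
  have hV := hcls (a 0) hsub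
  have hSg := (hbase _).mp hV
  have hsat := hSg σ hσ (fun n => ⟨a n, key n⟩)
  have h7 := congrArg Subtype.val hsat
  replace h7 : σ.1.eval A (fun n => a n) = σ.2.eval A (fun n => a n) :=
    (sub_eval A _ hsub _ (fun n => ⟨a n, key n⟩) σ.1).symm.trans (h7.trans (sub_eval A _ hsub _ _ σ.2))
  show (σ.1.subst r).eval A env = (σ.2.subst r).eval A env
  rw [eval_subst, eval_subst]
  exact h7

/-- The congruence on the relatively free algebra of `Σᵖ` given by `W`-equivalence. -/
noncomputable def thetaW (W Sg : Set (Ident S)) : Congruence (FreeA (SigmaP W Sg)) where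
  rel p q := Conseq W p.out q.out
  iseqv := ⟨fun _ => conseq_refl W _, fun h => conseq_symm h,
    fun h1 h2 => conseq_trans h1 h2⟩
  compat ω a b h := by
    have h1 : Conseq (SigmaP W Sg) ((FreeA (SigmaP W Sg)).op ω a).out
        (Term.app ω fun i => (a i).out) := out_equiv _ _
    have h2 : Conseq (SigmaP W Sg) ((FreeA (SigmaP W Sg)).op ω b).out
        (Term.app ω fun i => (b i).out) := out_equiv _ _
    exact conseq_trans (conseqSP h1)
      (conseq_trans (conseq_app h) (conseq_symm (conseqSP h2)))

theorem quotW_models (W Sg : Set (Ident S)) :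
    ((FreeA (SigmaP W Sg)).quot (thetaW W Sg)).Models W := by
  intro e he q
  set t : ℕ → Term S ℕ := fun n => ((q n).out).out with ht
  have hqe : q = fun n => Quotient.mk (thetaW W Sg).setoid
      (Quotient.mk (congOf (SigmaP W Sg)).setoid (t n)) := by
    funext n
    exact ((congrArg (Quotient.mk (thetaW W Sg).setoid) (Quotient.out_eq _)).trans
      (Quotient.out_eq _)).symm
  rw [hqe]
  refine ((quot_eval _ (thetaW W Sg) _ e.1).trans ?_).trans
    (quot_eval _ (thetaW W Sg) (fun n => Quotient.mk (congOf (SigmaP W Sg)).setoid (t n)) e.2).symm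
  refine ((congrArg (Quotient.mk (thetaW W Sg).setoid) (free_eval _ t e.1)).trans ?_).trans
    (congrArg (Quotient.mk (thetaW W Sg).setoid) (free_eval _ t e.2)).symm
  apply Quotient.sound
  show Conseq W (Quotient.mk (congOf (SigmaP W Sg)).setoid (e.1.subst t)).out
    (Quotient.mk (congOf (SigmaP W Sg)).setoid (e.2.subst t)).out
  exact conseq_trans (conseqSP (out_equiv _ _))
    (conseq_trans (conseq_subst t (conseq_of_mem he))
      (conseq_symm (conseqSP (out_equiv _ _))))

theorem class_models {V W Sg : Set (Ident S)}
    (hbase : ∀ A : Alg S, A.Models V ↔ A.Models Sg)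
    (a : (FreeA (SigmaP W Sg)).carrier)
    (h : (FreeA (SigmaP W Sg)).IsSubuniverse {b | (thetaW W Sg).rel a b}) :
    ((FreeA (SigmaP W Sg)).subAlg {b | (thetaW W Sg).rel a b} h
      ⟨a, (thetaW W Sg).iseqv.refl a⟩).Models V := by
  apply (hbase _).mpr
  intro σ hσ env
  set r : ℕ → Term S ℕ := fun n => (Subtype.val (env n)).out with hrd
  have hmem : ∀ n : ℕ, Conseq W a.out (r n) := fun n => (env n).2
  have hr : ∀ i j : ℕ, Conseq W (r i) (r j) :=
    fun i j => conseq_trans (conseq_symm (hmem i)) (hmem j)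
  have hid : ∀ ω : S.symbols, Conseq W (Term.app ω fun _ => r 0) (r 0) := by
    intro ω
    have hcl : Conseq W a.out
        ((FreeA (SigmaP W Sg)).op ω (fun _ => (env 0).1)).out :=
      h ω (fun _ => (env 0).1) (fun _ => (env 0).2)
    have h2 : Conseq (SigmaP W Sg)
        ((FreeA (SigmaP W Sg)).op ω (fun _ => (env 0).1)).out
        (Term.app ω fun _ => r 0) := out_equiv _ _
    exact conseq_trans (conseq_symm (conseqSP h2))
      (conseq_trans (conseq_symm hcl) (hmem 0))
  have hmemSP : (σ.1.subst r, σ.2.subst r) ∈ SigmaP W Sg := by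
    simp only [SigmaP, Set.mem_iUnion]
    exact ⟨σ, hσ, r, hr, hid, rfl⟩
  have heq : Quotient.mk (congOf (SigmaP W Sg)).setoid (σ.1.subst r)
      = Quotient.mk (congOf (SigmaP W Sg)).setoid (σ.2.subst r) :=
    Quotient.sound (conseq_of_mem hmemSP)
  apply Subtype.ext
  have hval1 := sub_eval (FreeA (SigmaP W Sg)) {b | (thetaW W Sg).rel a b} h
    ⟨a, (thetaW W Sg).iseqv.refl a⟩ env σ.1
  have hval2 := sub_eval (FreeA (SigmaP W Sg)) {b | (thetaW W Sg).rel a b} h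
    ⟨a, (thetaW W Sg).iseqv.refl a⟩ env σ.2
  rw [hval1, hval2]
  have henv : (fun n => Subtype.val (env n))
      = fun n => Quotient.mk (congOf (SigmaP W Sg)).setoid (r n) :=
    funext fun n => (Quotient.out_eq _).symm
  rw [henv, free_eval, free_eval, heq]

theorem free_in_maltsev {V W Sg : Set (Ident S)}
    (hbase : ∀ A : Alg S, A.Models V ↔ A.Models Sg) :
    InMaltsev V W (FreeA (SigmaP W Sg)) :=
  ⟨thetaW W Sg, quotW_models W Sg, fun a h => class_models hbase a h⟩

end StmtAux

/-- If `Σ` is an equational base of the variety `V` and the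
Mal'tsev product `V ∘ W` is a variety, then `Σᵖ` is an equational base for
`V ∘ W`. -/
theorem stmt_8 (S : Signature) (h0 : ∀ ω : S.symbols, 0 < S.arity ω)
    (V W : Set (Ident S)) (Sg : Set (Ident S))
    (hbase : ∀ A : Alg S, A.Models V ↔ A.Models Sg)
    (hvar : IsVarietyClass (InMaltsev V W)) :
    ∀ A : Alg S, InMaltsev V W A ↔ A.Models (SigmaP W Sg) := by
  intro A
  constructor
  · exact StmtAux.forward hbase A
  · intro hA
    obtain ⟨E, hE⟩ := hvar
    apply (hE A).mpr
    intro e he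
    have hF := StmtAux.free_in_maltsev (W := W) hbase
    have hsat := (hE _).mp hF e he
    have h2 := hsat (fun n =>
      Quotient.mk (StmtAux.congOf (SigmaP W Sg)).setoid (Term.var n))
    rw [StmtAux.free_eval, StmtAux.free_eval, StmtAux.subst_var,
      StmtAux.subst_var] at h2
    have h3 : (StmtAux.congOf (SigmaP W Sg)).setoid.r e.1 e.2 := Quotient.exact h2
    exact h3 A hA
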